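/- Let a, b, p, q be complex numbers with p ≠ 0, q ≠ 0 and p² − 4q ≠ 0, let r, t be integers with u_r ≠ 0 and v_r ≠ 0, write Δ² = p² − 4q, and let n be a non-negative integer. Then: (i) Σ_{j=0}^{2n} (−1)^j q^{rj} w_{2r(n−j)+t} = (w_t/2)·Σ_{j=0}^{n} (u_r²Δ²/4)^j v_{2r(n−j)} + (w_t/u_r)·Σ_{j=1}^{n} (u_r²Δ²/4)^j u_{r(2n−2j+1)} = w_t·v_{r(2n+1)}/v_r; and (ii) Σ_{j=0}^{2n−1} (−1)^j q^{rj} w_{r(2n−1−2j)+t} = ((w_{t+1} − q·w_{t−1})/2)·Σ_{j=0}^{n−1} (u_r²Δ²/4)^j u_{r(2n−2j−1)} + ((w_{t+1} − q·w_{t−1})/(u_rΔ²))·Σ_{j=1}^{n} (u_r²Δ²/4)^j v_{r(2n−2j)} = (w_{t+2rn} − q^{2rn} w_{t−2rn})/v_r. -/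

import Mathlib

open Finset

/-- Horadam sequence `w n (a,b;p,q)` for natural indices. -/
def horadamAux (a b p q : ℂ) : ℕ → ℂ
  | 0 => a
  | 1 => b
  | n + 2 => p * horadamAux a b p q (n + 1) - q * horadamAux a b p q n

/-- Horadam sequence at negative indices: `horadamNegAux a b p q n = w (-n)`,
defined via the backward recurrence `w (n-2) = (p * w (n-1) - w n) / q`. -/
noncomputable def horadamNegAux (a b p q : ℂ) : ℕ → ℂ
  | 0 => a
  | 1 => (p * a - b) / q
  | n + 2 => (p * horadamNegAux a b p q (n + 1) - horadamNegAux a b p q n) / q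

/-- Horadam sequence `w n (a,b;p,q)` for integer indices. -/
noncomputable def horadam (a b p q : ℂ) (n : ℤ) : ℂ :=
  if 0 ≤ n then horadamAux a b p q n.toNat else horadamNegAux a b p q n.natAbs

lemma horadam_ofNat (a b p q : ℂ) (k : ℕ) : horadam a b p q (k : ℤ) = horadamAux a b p q k := by
  simp [horadam]

lemma horadam_neg' (a b p q : ℂ) (k : ℕ) : horadam a b p q (-(k : ℤ)) = horadamNegAux a b p q k := by
  cases k with
  | zero => simp [horadam, horadamAux, horadamNegAux]
  | succ k =>
      have h : ¬ (0 : ℤ) ≤ -((k:ℤ)+1) := by omega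
      simp only [horadam, Nat.cast_add, Nat.cast_one, h, if_false]
      congr 1

lemma horadam_zero (a b p q : ℂ) : horadam a b p q 0 = a := by
  simpa [horadamAux] using horadam_ofNat a b p q 0

lemma horadam_one (a b p q : ℂ) : horadam a b p q 1 = b := by
  simpa [horadamAux] using horadam_ofNat a b p q 1

lemma horadam_rec (a b p q : ℂ) (hq : q ≠ 0) (m : ℤ) :
    horadam a b p q (m + 2) = p * horadam a b p q (m + 1) - q * horadam a b p q m := by
  rcases le_or_gt 0 m with h | h
  · obtain ⟨k, rfl⟩ := Int.eq_ofNat_of_zero_le h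
    have e2 : ((k:ℤ) + 2) = ((k+2 : ℕ) : ℤ) := by push_cast; try ring
    have e1 : ((k:ℤ) + 1) = ((k+1 : ℕ) : ℤ) := by push_cast; try ring
    rw [e2, e1, horadam_ofNat, horadam_ofNat, horadam_ofNat]
    rfl
  · rcases eq_or_lt_of_le (by omega : m ≤ -1) with h1 | h1
    · subst h1
      have e0 : (-1 : ℤ) + 2 = ((1:ℕ):ℤ) := by norm_num
      have e1 : (-1 : ℤ) + 1 = ((0:ℕ):ℤ) := by norm_num
      have e2 : (-1 : ℤ) = -((1:ℕ):ℤ) := by norm_num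
      rw [e0, e1, e2, horadam_ofNat, horadam_ofNat, horadam_neg']
      show b = p * a - q * ((p*a - b)/q)
      field_simp
      ring
    · obtain ⟨k, rfl⟩ : ∃ k : ℕ, m = -((k:ℤ) + 2) := ⟨(-m-2).toNat, by omega⟩
      have e2 : (-((k:ℤ)+2) + 2) = -((k:ℕ):ℤ) := by ring
      have e1 : (-((k:ℤ)+2) + 1) = -(((k+1:ℕ)):ℤ) := by push_cast; try ring
      have e0 : (-((k:ℤ)+2)) = -(((k+2:ℕ)):ℤ) := by push_cast; try ring
      rw [e2, e1, e0, horadam_neg', horadam_neg', horadam_neg']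
      show horadamNegAux a b p q k
        = p * horadamNegAux a b p q (k+1) - q * ((p * horadamNegAux a b p q (k+1) - horadamNegAux a b p q k)/q)
      field_simp
      ring

lemma horadam_binet (a b α β : ℂ) (hα : α ≠ 0) (hβ : β ≠ 0) (hne : α ≠ β) (m : ℤ) :
    horadam a b (α + β) (α * β) m
      = (b - a * β) / (α - β) * α ^ m + (a * α - b) / (α - β) * β ^ m := by
  have hq : α * β ≠ 0 := mul_ne_zero hα hβ
  have hd : α - β ≠ 0 := sub_ne_zero.mpr hne
  set A := (b - a * β) / (α - β) with hA
  set B := (a * α - b) / (α - β) with hB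
  set g : ℤ → ℂ := fun m => A * α ^ m + B * β ^ m with hg
  have pα : ∀ m : ℤ, α ^ (m + 1) = α ^ m * α := fun m => zpow_add_one₀ hα m
  have pβ : ∀ m : ℤ, β ^ (m + 1) = β ^ m * β := fun m => zpow_add_one₀ hβ m
  have grec : ∀ m : ℤ, g (m + 2) = (α + β) * g (m + 1) - (α * β) * g m := by
    intro m
    show A * α ^ (m+2) + B * β ^ (m+2)
      = (α + β) * (A * α ^ (m+1) + B * β ^ (m+1)) - (α*β) * (A * α ^ m + B * β ^ m)
    rw [show (m+2 : ℤ) = (m+1)+1 from by ring, pα, pβ, pα, pβ]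
    ring
  have key : ∀ m : ℤ,
      horadam a b (α + β) (α * β) m = g m ∧ horadam a b (α + β) (α * β) (m + 1) = g (m + 1) := by
    intro m
    induction m using Int.induction_on with
    | zero =>
        constructor
        · rw [horadam_zero]
          show a = A * α ^ (0:ℤ) + B * β ^ (0:ℤ)
          rw [zpow_zero, zpow_zero, hA, hB]
          field_simp
          ring
        · rw [zero_add, horadam_one]
          show b = A * α ^ (1:ℤ) + B * β ^ (1:ℤ)
          rw [zpow_one, zpow_one, hA, hB]
          field_simp
          ring
    | succ k ih =>
        refine ⟨ih.2, ?_⟩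
        rw [show ((k:ℤ) + 1 + 1) = (k:ℤ) + 2 from by ring, horadam_rec _ _ _ _ hq, ih.1, ih.2,
          grec]
    | pred k ih =>
        refine ⟨?_, by simp only [show (-(k:ℤ) - 1 + 1) = -(k:ℤ) from by ring]; exact ih.1⟩
        have hrec := horadam_rec a b (α+β) (α*β) hq (-(k:ℤ) - 1)
        rw [show (-(k:ℤ) - 1 + 2) = -(k:ℤ) + 1 from by ring,
          show (-(k:ℤ) - 1 + 1) = -(k:ℤ) from by ring, ih.2, ih.1] at hrec
        have hg2 := grec (-(k:ℤ) - 1)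
        rw [show (-(k:ℤ) - 1 + 2) = -(k:ℤ) + 1 from by ring,
          show (-(k:ℤ) - 1 + 1) = -(k:ℤ) from by ring] at hg2
        have h1 : (α*β) * horadam a b (α+β) (α*β) (-(k:ℤ) - 1) = (α*β) * g (-(k:ℤ) - 1) := by
          linear_combination hrec - hg2
        exact mul_left_cancel₀ hq h1
  exact (key m).1

set_option maxHeartbeats 3200000 in
theorem horadam_thm2 (a b p q : ℂ) (hp : p ≠ 0) (hq : q ≠ 0) (hD : p ^ 2 - 4 * q ≠ 0)
    (r t : ℤ) (hu : horadam 0 1 p q r ≠ 0) (hv : horadam 2 p p q r ≠ 0) (n : ℕ) :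
    ((∑ j ∈ Finset.range (2 * n + 1),
        (-1 : ℂ) ^ j * q ^ (r * (j : ℤ)) * horadam a b p q (2 * r * ((n : ℤ) - j) + t)
      = horadam a b p q t / 2
          * (∑ j ∈ Finset.range (n + 1),
              (horadam 0 1 p q r ^ 2 * (p ^ 2 - 4 * q) / 4) ^ j
                * horadam 2 p p q (2 * r * ((n : ℤ) - j)))
        + horadam a b p q t / horadam 0 1 p q r
          * ∑ j ∈ Finset.Icc 1 n,
              (horadam 0 1 p q r ^ 2 * (p ^ 2 - 4 * q) / 4) ^ j
                * horadam 0 1 p q (r * (2 * (n : ℤ) - 2 * j + 1))) ∧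
    (∑ j ∈ Finset.range (2 * n + 1),
        (-1 : ℂ) ^ j * q ^ (r * (j : ℤ)) * horadam a b p q (2 * r * ((n : ℤ) - j) + t)
      = horadam a b p q t * horadam 2 p p q (r * (2 * (n : ℤ) + 1)) / horadam 2 p p q r)) ∧
    ((∑ j ∈ Finset.range (2 * n),
        (-1 : ℂ) ^ j * q ^ (r * (j : ℤ))
          * horadam a b p q (r * (2 * (n : ℤ) - 1 - 2 * j) + t)
      = (horadam a b p q (t + 1) - q * horadam a b p q (t - 1)) / 2
          * (∑ j ∈ Finset.range n,
              (horadam 0 1 p q r ^ 2 * (p ^ 2 - 4 * q) / 4) ^ j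
                * horadam 0 1 p q (r * (2 * (n : ℤ) - 2 * j - 1)))
        + (horadam a b p q (t + 1) - q * horadam a b p q (t - 1))
            / (horadam 0 1 p q r * (p ^ 2 - 4 * q))
          * ∑ j ∈ Finset.Icc 1 n,
              (horadam 0 1 p q r ^ 2 * (p ^ 2 - 4 * q) / 4) ^ j
                * horadam 2 p p q (r * (2 * (n : ℤ) - 2 * j))) ∧
    (∑ j ∈ Finset.range (2 * n),
        (-1 : ℂ) ^ j * q ^ (r * (j : ℤ))
          * horadam a b p q (r * (2 * (n : ℤ) - 1 - 2 * j) + t)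
      = (horadam a b p q (t + 2 * r * n)
          - q ^ (2 * r * (n : ℤ)) * horadam a b p q (t - 2 * r * n))
        / horadam 2 p p q r)) := by
  -- roots
  obtain ⟨δ, hδ⟩ := IsAlgClosed.exists_pow_nat_eq (p^2 - 4*q) (n := 2) (by norm_num)
  have hδ0 : δ ≠ 0 := by
    intro h; apply hD; rw [← hδ, h]; ring
  obtain ⟨α, β, hs, hpr, hne⟩ : ∃ α β : ℂ, α + β = p ∧ α * β = q ∧ α ≠ β :=
    ⟨(p + δ)/2, (p - δ)/2, by ring, by linear_combination (-1/4 : ℂ) * hδ,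
      by intro h; apply hδ0; linear_combination h⟩
  have hdne : α - β ≠ 0 := sub_ne_zero.mpr hne
  have hα : α ≠ 0 := by
    intro h; apply hq; rw [← hpr, h]; ring
  have hβ : β ≠ 0 := by
    intro h; apply hq; rw [← hpr, h]; ring
  have hDelta : p ^ 2 - 4 * q = (α - β)^2 := by rw [← hs, ← hpr]; ring
  -- eval lemmas
  obtain ⟨A, B, hwE⟩ : ∃ A B : ℂ, ∀ m : ℤ, horadam a b p q m = A * α ^ m + B * β ^ m :=
    ⟨(b - a*β)/(α-β), (a*α - b)/(α-β),
      fun m => by rw [← hs, ← hpr]; exact horadam_binet a b α β hα hβ hne m⟩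
  have huE : ∀ m : ℤ, horadam 0 1 p q m = (α ^ m - β ^ m)/(α-β) := by
    intro m
    rw [← hs, ← hpr, horadam_binet 0 1 α β hα hβ hne m]
    field_simp
    ring
  have hvE : ∀ m : ℤ, horadam 2 p p q m = α ^ m + β ^ m := by
    intro m
    rw [show horadam 2 p p q m = horadam 2 p p q m from rfl, ← hs, ← hpr,
      horadam_binet 2 (α+β) α β hα hβ hne m]
    field_simp
    ring
  -- nonzero facts
  have hK : α ^ r ≠ 0 := zpow_ne_zero r hα
  have hL : β ^ r ≠ 0 := zpow_ne_zero r hβ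
  have hKL : α ^ r + β ^ r ≠ 0 := by
    have := hv; rw [hvE r] at this; exact this
  have hKmL : α ^ r - β ^ r ≠ 0 := by
    have h2 := hu; rw [huE r] at h2
    intro h0; apply h2; rw [h0]; simp
  -- zpow helpers
  have hzp : ∀ (c : ℂ) (s : ℤ) (k : ℕ), s = (k:ℤ) → c ^ (r * s) = (c ^ r) ^ k := by
    rintro c s k rfl; rw [zpow_mul, zpow_natCast]
  have hzr : ∀ (c : ℂ), c ≠ 0 → ∀ (s : ℤ) (m k : ℕ),
      c ^ (s * ((m:ℤ) - (k:ℤ))) = ((c^s) ^ m) * (((c^s)⁻¹) ^ k) := by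
    intro c hc s m k
    rw [show s * ((m:ℤ) - (k:ℤ)) = s * (m:ℤ) - s * (k:ℤ) from by ring, zpow_sub₀ hc,
      zpow_mul, zpow_mul, zpow_natCast, zpow_natCast, div_eq_mul_inv, inv_pow]
  have hqr : q ^ r = α ^ r * β ^ r := by rw [← hpr, mul_zpow]
  -- Icc to range
  have hicc : ∀ (m : ℕ) (g : ℕ → ℂ), ∑ j ∈ Icc 1 m, g j = (∑ j ∈ range (m+1), g j) - g 0 := by
    intro m g
    have : range (m+1) = insert 0 (Icc 1 m) := by
      ext x; simp [Finset.mem_range, Finset.mem_insert, Finset.mem_Icc]; omega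
    rw [this, Finset.sum_insert (by simp)]
    ring
  
  have h2a : α ^ (2*r) = (α^r)^(2:ℕ) := by
    rw [show (2*r:ℤ) = r*((2:ℕ):ℤ) from by push_cast; try ring, zpow_mul, zpow_natCast]
  have h2b : β ^ (2*r) = (β^r)^(2:ℕ) := by
    rw [show (2*r:ℤ) = r*((2:ℕ):ℤ) from by push_cast; try ring, zpow_mul, zpow_natCast]
  have hx1 : -(β^r * (α^r)⁻¹) ≠ 1 := by
    intro h
    apply hKL
    field_simp at h
    linear_combination -h
  have hy1 : -(α^r * (β^r)⁻¹) ≠ 1 := by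
    intro h
    apply hKL
    field_simp at h
    linear_combination -h
  have hx2 : -(β^r * (α^r)⁻¹) - 1 ≠ 0 := sub_ne_zero.mpr hx1
  have hy2 : -(α^r * (β^r)⁻¹) - 1 ≠ 0 := sub_ne_zero.mpr hy1
  -- part (i) closed form
  have term1 : ∀ j : ℕ, (-1:ℂ)^j * q^(r*(j:ℤ)) * horadam a b p q (2*r*((n:ℤ) - (j:ℕ)) + t)
      = (A * α^t * (((α^r)^(2:ℕ)))^n) * (-(β^r * (α^r)⁻¹))^j
      + (B * β^t * (((β^r)^(2:ℕ)))^n) * (-(α^r * (β^r)⁻¹))^j := by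
    intro j
    rw [hwE, show 2*r*((n:ℤ) - (j:ℤ)) + t = t + (2*r) * ((n:ℤ) - (j:ℤ)) from by ring,
      zpow_add₀ hα, zpow_add₀ hβ, hzr α hα (2*r) n j, hzr β hβ (2*r) n j, h2a, h2b,
      hzp q (j:ℤ) j rfl, hqr]
    generalize α^r = x at hK ⊢
    generalize β^r = y at hL ⊢
    field_simp
    have hxj : x^j * x⁻¹^j = 1 := by rw [← mul_pow, mul_inv_cancel₀ hK, one_pow]
    have hyj : y^j * y⁻¹^j = 1 := by rw [← mul_pow, mul_inv_cancel₀ hL, one_pow]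
    linear_combination (x^(n*2)*y^j*A*α^t*x⁻¹^j*(-1:ℂ)^j) * hxj + (x^j*y^(n*2)*B*β^t*y⁻¹^j*(-1:ℂ)^j) * hyj
  have hgeomx : ∑ j ∈ range (2*n+1), (-(β^r * (α^r)⁻¹))^j
      = ((α^r)^(2*n+1) + (β^r)^(2*n+1)) / ((α^r + β^r) * (α^r)^(2*n)) := by
    rw [geom_sum_eq hx1, Odd.neg_pow ⟨n, by ring⟩, mul_pow, inv_pow]
    rw [div_eq_div_iff hx2 (by exact mul_ne_zero hKL (pow_ne_zero _ hK))]
    field_simp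
    ring
  have hgeomy : ∑ j ∈ range (2*n+1), (-(α^r * (β^r)⁻¹))^j
      = ((α^r)^(2*n+1) + (β^r)^(2*n+1)) / ((α^r + β^r) * (β^r)^(2*n)) := by
    rw [geom_sum_eq hy1, Odd.neg_pow ⟨n, by ring⟩, mul_pow, inv_pow]
    rw [div_eq_div_iff hy2 (by exact mul_ne_zero hKL (pow_ne_zero _ hL))]
    field_simp
    ring
  have hD1 : (α^r + β^r) * (α^r)^(2*n) ≠ 0 := mul_ne_zero hKL (pow_ne_zero _ hK)
  have hD2 : (α^r + β^r) * (β^r)^(2*n) ≠ 0 := mul_ne_zero hKL (pow_ne_zero _ hL)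
  have hS1 : ∑ j ∈ range (2*n+1), (-1:ℂ)^j * q^(r*(j:ℤ)) * horadam a b p q (2*r*((n:ℤ)-(j:ℕ))+t)
      = horadam a b p q t * horadam 2 p p q (r*(2*(n:ℤ)+1)) / horadam 2 p p q r := by
    rw [Finset.sum_congr rfl (fun j _ => term1 j), Finset.sum_add_distrib, ← Finset.mul_sum,
      ← Finset.mul_sum, hgeomx, hgeomy, hwE t, hvE, hvE,
      hzp α (2*(n:ℤ)+1) (2*n+1) (by push_cast; try ring),
      hzp β (2*(n:ℤ)+1) (2*n+1) (by push_cast; try ring),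
      ← mul_div_assoc, ← mul_div_assoc, div_add_div _ _ hD1 hD2,
      div_eq_div_iff (mul_ne_zero hD1 hD2) hKL]
    ring
  -- part (ii) closed form
  have term2 : ∀ j : ℕ, (-1:ℂ)^j * q^(r*(j:ℤ)) * horadam a b p q (r*(2*(n:ℤ)-1-2*(j:ℕ)) + t)
      = (A * α^t * (((α^r)^(2:ℕ)))^n * (α^r)⁻¹) * (-(β^r * (α^r)⁻¹))^j
      + (B * β^t * (((β^r)^(2:ℕ)))^n * (β^r)⁻¹) * (-(α^r * (β^r)⁻¹))^j := by
    intro j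
    rw [hwE, show r*(2*(n:ℤ)-1-2*(j:ℤ)) + t = t + (2*r) * ((n:ℤ) - (j:ℤ)) + (-r) from by ring,
      zpow_add₀ hα, zpow_add₀ hβ, zpow_add₀ hα, zpow_add₀ hβ,
      hzr α hα (2*r) n j, hzr β hβ (2*r) n j, h2a, h2b, zpow_neg, zpow_neg,
      hzp q (j:ℤ) j rfl, hqr]
    generalize α^r = x at hK ⊢
    generalize β^r = y at hL ⊢
    field_simp
    have hxj : x^j * x⁻¹^j = 1 := by rw [← mul_pow, mul_inv_cancel₀ hK, one_pow]
    have hyj : y^j * y⁻¹^j = 1 := by rw [← mul_pow, mul_inv_cancel₀ hL, one_pow]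
    linear_combination (x^(n*2)*y*y^j*A*α^t*x⁻¹^j*(-1:ℂ)^j) * hxj + (x*x^j*y^(n*2)*B*β^t*y⁻¹^j*(-1:ℂ)^j) * hyj
  have hgeomx2 : ∑ j ∈ range (2*n), (-(β^r * (α^r)⁻¹))^j
      = ((α^r)^(2*n) - (β^r)^(2*n)) * (α^r) / ((α^r + β^r) * (α^r)^(2*n)) := by
    rw [geom_sum_eq hx1, Even.neg_pow (even_two_mul n), mul_pow, inv_pow]
    rw [div_eq_div_iff hx2 (by exact mul_ne_zero hKL (pow_ne_zero _ hK))]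
    field_simp
    ring
  have hgeomy2 : ∑ j ∈ range (2*n), (-(α^r * (β^r)⁻¹))^j
      = ((β^r)^(2*n) - (α^r)^(2*n)) * (β^r) / ((α^r + β^r) * (β^r)^(2*n)) := by
    rw [geom_sum_eq hy1, Even.neg_pow (even_two_mul n), mul_pow, inv_pow]
    rw [div_eq_div_iff hy2 (by exact mul_ne_zero hKL (pow_ne_zero _ hL))]
    field_simp
    ring
  have hS2 : ∑ j ∈ range (2*n), (-1:ℂ)^j * q^(r*(j:ℤ)) * horadam a b p q (r*(2*(n:ℤ)-1-2*(j:ℕ))+t)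
      = (horadam a b p q (t + 2*r*(n:ℕ)) - q^(2*r*(n:ℤ)) * horadam a b p q (t - 2*r*(n:ℕ)))
        / horadam 2 p p q r := by
    rw [Finset.sum_congr rfl (fun j _ => term2 j), Finset.sum_add_distrib, ← Finset.mul_sum,
      ← Finset.mul_sum, hgeomx2, hgeomy2, hwE (t + 2*r*(n:ℕ)), hwE (t - 2*r*(n:ℕ)), hvE r,
      zpow_add₀ hα t, zpow_add₀ hβ t, zpow_sub₀ hα t, zpow_sub₀ hβ t,
      show (2*r*(n:ℤ)) = r * (2*(n:ℤ)) from by ring,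
      hzp α (2*(n:ℤ)) (2*n) (by push_cast; try ring),
      hzp β (2*(n:ℤ)) (2*n) (by push_cast; try ring),
      hzp q (2*(n:ℤ)) (2*n) (by push_cast; try ring), hqr, mul_pow,
      ← mul_div_assoc, ← mul_div_assoc, div_add_div _ _ hD1 hD2,
      div_eq_div_iff (mul_ne_zero hD1 hD2) hKL]
    field_simp
    ring
  
  have hUne : (α^r - β^r)/(α-β) ≠ 0 := div_ne_zero hKmL hdne
  set C : ℂ := horadam 0 1 p q r ^ 2 * (p ^ 2 - 4 * q) / 4 with hC
  set E : ℂ := horadam a b p q (t + 1) - q * horadam a b p q (t - 1) with hE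
  -- part (i) first equality : induction
  have hRi : ∀ m : ℕ,
      horadam a b p q t / 2 * (∑ j ∈ range (m+1), C ^ j * horadam 2 p p q (2 * r * ((m : ℤ) - j)))
        + horadam a b p q t / horadam 0 1 p q r
          * ∑ j ∈ Icc 1 m, C ^ j * horadam 0 1 p q (r * (2 * (m : ℤ) - 2 * j + 1))
      = horadam a b p q t * horadam 2 p p q (r * (2 * (m:ℤ) + 1)) / horadam 2 p p q r := by
    intro m
    induction m with
    | zero =>
        rw [show (Icc 1 0 : Finset ℕ) = ∅ from Finset.Icc_eq_empty (by omega), Finset.sum_empty,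
          Finset.sum_range_one, pow_zero, one_mul]
        rw [show 2 * r * ((0:ℕ) - (0:ℕ) : ℤ) = (0:ℤ) from by norm_num, horadam_zero,
          show r * (2 * ((0:ℕ):ℤ) + 1) = r from by norm_num]
        field_simp
        ring
    | succ m ih =>
        have e1 : ∑ j ∈ range (m+1+1), C ^ j * horadam 2 p p q (2 * r * ((↑(m+1) : ℤ) - ↑j))
            = C * (∑ j ∈ range (m+1), C ^ j * horadam 2 p p q (2 * r * ((m : ℤ) - ↑j)))
              + horadam 2 p p q (2 * r * ((m:ℤ) + 1)) := by
          rw [Finset.sum_range_succ' _ (m+1), Finset.mul_sum]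
          congr 1
          · refine Finset.sum_congr rfl fun j _ => ?_
            rw [pow_succ, show (2 * r * ((↑(m+1) : ℤ) - ↑(j+1))) = 2 * r * ((m:ℤ) - ↑j) from by
              push_cast; try ring]
            ring
          · rw [pow_zero, one_mul]
            congr 1 <;> (push_cast; try ring)
        have e2 : ∑ j ∈ range (m+1+1), C ^ j * horadam 0 1 p q (r * (2 * (↑(m+1) : ℤ) - 2 * ↑j + 1))
            = C * (∑ j ∈ range (m+1), C ^ j * horadam 0 1 p q (r * (2 * (m : ℤ) - 2 * ↑j + 1)))
              + horadam 0 1 p q (r * (2 * (m:ℤ) + 3)) := by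
          rw [Finset.sum_range_succ' _ (m+1), Finset.mul_sum]
          congr 1
          · refine Finset.sum_congr rfl fun j _ => ?_
            rw [pow_succ, show (r * (2 * (↑(m+1) : ℤ) - 2 * ↑(j+1) + 1)) = r * (2 * (m:ℤ) - 2 * ↑j + 1) from by
              push_cast; try ring]
            ring
          · rw [pow_zero, one_mul]
            congr 1 <;> (push_cast; try ring)
        rw [hicc (m+1), hicc m] at *
        rw [e1, e2]
        rw [show (C ^ (0:ℕ) * horadam 0 1 p q (r * (2 * (↑(m+1):ℤ) - 2 * ((0:ℕ):ℤ) + 1)))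
            = horadam 0 1 p q (r * (2 * (m:ℤ) + 3)) from by
          rw [pow_zero, one_mul]; congr 1 <;> (push_cast; try ring)]
        rw [show (C ^ (0:ℕ) * horadam 0 1 p q (r * (2 * (↑m:ℤ) - 2 * ((0:ℕ):ℤ) + 1)))
            = horadam 0 1 p q (r * (2 * (m:ℤ) + 1)) from by
          rw [pow_zero, one_mul]; congr 1 <;> (push_cast; try ring)] at ih
        rw [show horadam 2 p p q (r * (2 * (↑(m+1):ℤ) + 1)) = horadam 2 p p q (r * (2 * (m:ℤ) + 3)) from by
          congr 1 <;> (push_cast; try ring)]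
        have step : horadam a b p q t / 2 * horadam 2 p p q (2 * r * ((m:ℤ) + 1))
            + C * (horadam a b p q t / horadam 0 1 p q r) * horadam 0 1 p q (r * (2 * (m:ℤ) + 1))
            + C * (horadam a b p q t * horadam 2 p p q (r * (2 * (m:ℤ) + 1)) / horadam 2 p p q r)
            = horadam a b p q t * horadam 2 p p q (r * (2 * (m:ℤ) + 3)) / horadam 2 p p q r := by
          have hCU : C * (horadam a b p q t / horadam 0 1 p q r) * horadam 0 1 p q (r * (2 * (m:ℤ) + 1))
              = horadam a b p q t * ((α^r - β^r) * (α ^ (r * (2 * (m:ℤ) + 1)) - β ^ (r * (2 * (m:ℤ) + 1)))) / 4 := by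
            rw [hC, hDelta, huE r, huE (r * (2 * (m:ℤ) + 1))]
            field_simp
          have hCV : C * (horadam a b p q t * horadam 2 p p q (r * (2 * (m:ℤ) + 1)) / horadam 2 p p q r)
              = horadam a b p q t * ((α^r - β^r)^2 * horadam 2 p p q (r * (2 * (m:ℤ) + 1)))
                / (4 * horadam 2 p p q r) := by
            rw [hC, hDelta, huE r]
            field_simp
          rw [hCU, hCV, hvE (2 * r * ((m:ℤ) + 1)), hvE (r * (2 * (m:ℤ) + 1)),
            hvE (r * (2 * (m:ℤ) + 3)), hvE r,
            show 2 * r * ((m:ℤ) + 1) = r * (2 * (m:ℤ) + 2) from by ring,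
            hzp α (2 * (m:ℤ) + 2) (2*m+2) (by push_cast; try ring),
            hzp β (2 * (m:ℤ) + 2) (2*m+2) (by push_cast; try ring),
            hzp α (2 * (m:ℤ) + 1) (2*m+1) (by push_cast; try ring),
            hzp β (2 * (m:ℤ) + 1) (2*m+1) (by push_cast; try ring),
            hzp α (2 * (m:ℤ) + 3) (2*m+3) (by push_cast; try ring),
            hzp β (2 * (m:ℤ) + 3) (2*m+3) (by push_cast; try ring)]
          field_simp
          ring
        linear_combination C * ih + step
  -- part (ii) first equality : induction
  have hRii : ∀ m : ℕ,
      E / 2 * (∑ j ∈ range m, C ^ j * horadam 0 1 p q (r * (2 * (m : ℤ) - 2 * j - 1)))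
        + E / (horadam 0 1 p q r * (p ^ 2 - 4 * q))
          * ∑ j ∈ Icc 1 m, C ^ j * horadam 2 p p q (r * (2 * (m : ℤ) - 2 * j))
      = (horadam a b p q (t + 2 * r * (m:ℕ)) - q ^ (2 * r * (m : ℤ)) * horadam a b p q (t - 2 * r * (m:ℕ)))
        / horadam 2 p p q r := by
    intro m
    induction m with
    | zero =>
        rw [show (Icc 1 0 : Finset ℕ) = ∅ from Finset.Icc_eq_empty (by omega), Finset.sum_empty,
          Finset.range_zero, Finset.sum_empty]
        norm_num
    | succ m ih =>
        have e3 : ∑ j ∈ range (m+1), C ^ j * horadam 0 1 p q (r * (2 * (↑(m+1) : ℤ) - 2 * ↑j - 1))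
            = C * (∑ j ∈ range m, C ^ j * horadam 0 1 p q (r * (2 * (m : ℤ) - 2 * ↑j - 1)))
              + horadam 0 1 p q (r * (2 * (m:ℤ) + 1)) := by
          rw [Finset.sum_range_succ' _ m, Finset.mul_sum]
          congr 1
          · refine Finset.sum_congr rfl fun j _ => ?_
            rw [pow_succ, show (r * (2 * (↑(m+1) : ℤ) - 2 * ↑(j+1) - 1)) = r * (2 * (m:ℤ) - 2 * ↑j - 1) from by
              push_cast; try ring]
            ring
          · rw [pow_zero, one_mul]
            congr 1 <;> (push_cast; try ring)
        have e4 : ∑ j ∈ range (m+1+1), C ^ j * horadam 2 p p q (r * (2 * (↑(m+1) : ℤ) - 2 * ↑j))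
            = C * (∑ j ∈ range (m+1), C ^ j * horadam 2 p p q (r * (2 * (m : ℤ) - 2 * ↑j)))
              + horadam 2 p p q (r * (2 * (m:ℤ) + 2)) := by
          rw [Finset.sum_range_succ' _ (m+1), Finset.mul_sum]
          congr 1
          · refine Finset.sum_congr rfl fun j _ => ?_
            rw [pow_succ, show (r * (2 * (↑(m+1) : ℤ) - 2 * ↑(j+1))) = r * (2 * (m:ℤ) - 2 * ↑j) from by
              push_cast; try ring]
            ring
          · rw [pow_zero, one_mul]
            congr 1 <;> (push_cast; try ring)
        rw [hicc (m+1), hicc m] at *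
        rw [e3, e4]
        rw [show (C ^ (0:ℕ) * horadam 2 p p q (r * (2 * (↑(m+1):ℤ) - 2 * ((0:ℕ):ℤ))))
            = horadam 2 p p q (r * (2 * (m:ℤ) + 2)) from by
          rw [pow_zero, one_mul]; congr 1 <;> (push_cast; try ring)]
        rw [show (C ^ (0:ℕ) * horadam 2 p p q (r * (2 * (↑m:ℤ) - 2 * ((0:ℕ):ℤ))))
            = horadam 2 p p q (r * (2 * (m:ℤ))) from by
          rw [pow_zero, one_mul]; congr 1 <;> (push_cast; try ring)] at ih
        have step : E / 2 * horadam 0 1 p q (r * (2 * (m:ℤ) + 1))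
            + C * (E / (horadam 0 1 p q r * (p ^ 2 - 4 * q))) * horadam 2 p p q (r * (2 * (m:ℤ)))
            + C * ((horadam a b p q (t + 2 * r * (m:ℕ)) - q ^ (2 * r * (m : ℤ)) * horadam a b p q (t - 2 * r * (m:ℕ)))
                / horadam 2 p p q r)
            = (horadam a b p q (t + 2 * r * ((m:ℕ)+1)) - q ^ (2 * r * ((m : ℤ)+1)) * horadam a b p q (t - 2 * r * ((m:ℕ)+1)))
              / horadam 2 p p q r := by
          have hCW : C * (E / (horadam 0 1 p q r * (p ^ 2 - 4 * q))) * horadam 2 p p q (r * (2 * (m:ℤ)))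
              = E * ((α^r - β^r) * horadam 2 p p q (r * (2 * (m:ℤ)))) / (4 * (α - β)) := by
            rw [hC, hDelta, huE r]
            field_simp
          have hw1 : horadam a b p q (t + 1) - q * horadam a b p q (t - 1)
              = (α - β) * (A * α ^ t - B * β ^ t) := by
            rw [hwE (t+1), hwE (t-1), ← hpr, zpow_add₀ hα t 1, zpow_add₀ hβ t 1,
              zpow_sub₀ hα t 1, zpow_sub₀ hβ t 1, zpow_one, zpow_one]
            field_simp
            ring
          have hw2 : horadam a b p q (t + 2 * r * (m:ℕ)) - q ^ (2 * r * (m : ℤ)) * horadam a b p q (t - 2 * r * (m:ℕ))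
              = (A * α ^ t - B * β ^ t) * ((α^r)^(2*m) - (β^r)^(2*m)) := by
            rw [hwE (t + 2 * r * ((m:ℕ):ℤ)), hwE (t - 2 * r * ((m:ℕ):ℤ)),
              zpow_add₀ hα t (2 * r * ((m:ℕ):ℤ)), zpow_add₀ hβ t (2 * r * ((m:ℕ):ℤ)),
              zpow_sub₀ hα t (2 * r * ((m:ℕ):ℤ)), zpow_sub₀ hβ t (2 * r * ((m:ℕ):ℤ)),
              show (2 * r * ((m:ℕ):ℤ)) = r * (2 * (m:ℤ)) from by ring,
              hzp α (2 * (m:ℤ)) (2*m) (by push_cast; try ring),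
              hzp β (2 * (m:ℤ)) (2*m) (by push_cast; try ring),
              hzp q (2 * (m:ℤ)) (2*m) (by push_cast; try ring), hqr, mul_pow]
            field_simp
            ring
          have hw3 : horadam a b p q (t + 2 * r * ((m:ℕ)+1)) - q ^ (2 * r * ((m : ℤ)+1)) * horadam a b p q (t - 2 * r * ((m:ℕ)+1))
              = (A * α ^ t - B * β ^ t) * ((α^r)^(2*m+2) - (β^r)^(2*m+2)) := by
            rw [hwE (t + 2 * r * (((m:ℕ):ℤ)+1)), hwE (t - 2 * r * (((m:ℕ):ℤ)+1)),
              zpow_add₀ hα t (2 * r * (((m:ℕ):ℤ)+1)), zpow_add₀ hβ t (2 * r * (((m:ℕ):ℤ)+1)),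
              zpow_sub₀ hα t (2 * r * (((m:ℕ):ℤ)+1)), zpow_sub₀ hβ t (2 * r * (((m:ℕ):ℤ)+1)),
              show (2 * r * (((m:ℕ):ℤ)+1)) = r * (2 * (m:ℤ) + 2) from by ring,
              hzp α (2 * (m:ℤ) + 2) (2*m+2) (by push_cast; try ring),
              hzp β (2 * (m:ℤ) + 2) (2*m+2) (by push_cast; try ring),
              hzp q (2 * (m:ℤ) + 2) (2*m+2) (by push_cast; try ring), hqr, mul_pow]
            field_simp
            ring
          rw [hCW, hE, hw1, hw2, hw3, hC, hDelta, huE r, huE (r * (2 * (m:ℤ) + 1)),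
            hvE (r * (2 * (m:ℤ))), hvE r,
            hzp α (2 * (m:ℤ) + 1) (2*m+1) (by push_cast; try ring),
            hzp β (2 * (m:ℤ) + 1) (2*m+1) (by push_cast; try ring),
            hzp α (2 * (m:ℤ)) (2*m) (by push_cast; try ring),
            hzp β (2 * (m:ℤ)) (2*m) (by push_cast; try ring)]
          field_simp
          ring
        rw [show (t + 2 * r * ((m:ℕ)+1:ℕ) : ℤ) = t + 2 * r * ((m:ℤ)+1) from by push_cast; try ring,
          show (t - 2 * r * ((m:ℕ)+1:ℕ) : ℤ) = t - 2 * r * ((m:ℤ)+1) from by push_cast; try ring,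
          show (2 * r * ((↑(m+1):ℕ) : ℤ)) = 2 * r * ((m:ℤ)+1) from by push_cast; try ring]
        linear_combination C * ih + step
  refine ⟨⟨hS1.trans (hRi n).symm, hS1⟩, hS2.trans (hRii n).symm, hS2⟩
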